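/- arXiv:2210.03626 — 3 statements merged into one kernel-verified Lean document; each statement's English description precedes it below -/
import Mathlib

section
/- Let M be a faithful multiplication R-module and I an ideal of R. Then 𝔓_I·M ⊆ 𝔓_{IM}, where 𝔓_I is the intersection of all minimal prime ideals of R containing I and 𝔓_{IM} is the intersection of all minimal prime submodules of M containing IM. If moreover M is finitely generated, then 𝔓_I·M = 𝔓_{IM}. -/
variable {R : Type*} [CommRing R] {M : Type*} [AddCommGroup M] [Module R M]

/-- `M` is a multiplication module: every submodule is `IM` for some ideal `I`. -/
def IsMultiplicationModule (R M : Type*) [CommRing R] [AddCommGroup M] [Module R M] : Prop :=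
  ∀ N : Submodule R M, ∃ I : Ideal R, N = I • (⊤ : Submodule R M)

/-- A prime submodule. -/
def Submodule.IsPrimeSubmodule (P : Submodule R M) : Prop :=
  P ≠ ⊤ ∧ ∀ (r : R) (m : M), r • m ∈ P → m ∈ P ∨ r ∈ P.colon ⊤

/-- `M` is reduced: the intersection of all prime submodules is zero. -/
def IsReducedModule (R M : Type*) [CommRing R] [AddCommGroup M] [Module R M] : Prop :=
  sInf {P : Submodule R M | P.IsPrimeSubmodule} = ⊥

/-- A minimal prime submodule of `M`. -/
def Submodule.IsMinimalPrime (P : Submodule R M) : Prop :=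
  P.IsPrimeSubmodule ∧ ∀ Q : Submodule R M, Q.IsPrimeSubmodule → Q ≤ P → Q = P

/-- `𝔓_K`: the intersection of all minimal prime submodules containing `K`
(equal to `M` if there are none). -/
def primeRad (K : Submodule R M) : Submodule R M :=
  sInf {P : Submodule R M | P.IsMinimalPrime ∧ K ≤ P}

/-- `V(K)`: the set of minimal prime submodules containing `K`. -/
def Vset (K : Submodule R M) : Set (Submodule R M) :=
  {P : Submodule R M | P.IsMinimalPrime ∧ K ≤ P}

/-- A quasi `z°`-submodule. -/
def IsQuasiZSubmodule (N : Submodule R M) : Prop :=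
  N ≠ ⊤ ∧ ∀ a ∈ N.colon ⊤, primeRad (Ideal.span {a} • (⊤ : Submodule R M)) ≤ N

/-- `𝔓_I` for an ideal: intersection of all minimal prime ideals of `R` containing `I`. -/
def idealPrimeRad (I : Ideal R) : Ideal R :=
  sInf {p : Ideal R | p ∈ minimalPrimes R ∧ I ≤ p}

/-- A `z°`-ideal of `R`. -/
def IsZIdeal (I : Ideal R) : Prop :=
  I ≠ ⊤ ∧ ∀ a ∈ I, idealPrimeRad (Ideal.span {a}) ≤ I

/-- `(0 :_M J)` for an ideal `J`. -/
def pointAnn (J : Ideal R) : Submodule R M where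
  carrier := {m : M | ∀ j ∈ J, j • m = 0}
  zero_mem' := by intro j _; simp
  add_mem' := by
    intro a b ha hb j hj
    rw [smul_add, ha j hj, hb j hj, add_zero]
  smul_mem' := by
    intro c m hm j hj
    rw [smul_comm, hm j hj, smul_zero]
lemma aux_colon_smul (hmul : IsMultiplicationModule R M) (N : Submodule R M) :
    N.colon ⊤ • (⊤ : Submodule R M) = N := by
  obtain ⟨I, hI⟩ := hmul N
  apply le_antisymm
  · rw [Submodule.smul_le]
    intro r hr n hn
    exact Submodule.mem_colon.mp hr n hn
  · conv_lhs => rw [hI]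
    apply Submodule.smul_mono_left
    intro a ha
    refine Submodule.mem_colon.mpr fun m _ => ?_
    rw [hI]
    exact Submodule.smul_mem_smul ha Submodule.mem_top

lemma aux_dichotomy (hmul : IsMultiplicationModule R M) (𝔪 : Ideal R) :
    (∃ (x : M) (t : R), t ∉ 𝔪 ∧ ∀ y : M, t • y ∈ Submodule.span R {x}) ∨
      ∀ y : M, ∃ c ∈ 𝔪, c • y = y := by
  by_cases h : ∀ x : M, (Submodule.span R {x}).colon ⊤ ≤ 𝔪
  · right
    have htop : (⊤ : Submodule R M) ≤ 𝔪 • ⊤ := by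
      intro z _
      have hz : z ∈ (Submodule.span R {z}).colon ⊤ • (⊤ : Submodule R M) := by
        rw [aux_colon_smul hmul]
        exact Submodule.mem_span_singleton_self z
      exact Submodule.smul_mono_left (h z) hz
    intro y
    have h1 : Submodule.span R {y} ≤ 𝔪 • Submodule.span R {y} := by
      conv_lhs => rw [← aux_colon_smul hmul (Submodule.span R {y})]
      calc (Submodule.span R {y}).colon ⊤ • (⊤ : Submodule R M)
          ≤ (Submodule.span R {y}).colon ⊤ • (𝔪 • ⊤) := smul_mono_right _ htop
        _ = 𝔪 • ((Submodule.span R {y}).colon ⊤ • ⊤) := by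
            rw [← Submodule.smul_assoc, ← Submodule.smul_assoc, smul_eq_mul, smul_eq_mul,
              mul_comm]
        _ = 𝔪 • Submodule.span R {y} := by rw [aux_colon_smul hmul]
    have h2 : 𝔪 • Submodule.span R {y} ≤
        Submodule.map (LinearMap.toSpanSingleton R M y) 𝔪 := by
      rw [Submodule.smul_le]
      intro c hc n hn
      obtain ⟨d, rfl⟩ := Submodule.mem_span_singleton.mp hn
      exact ⟨c * d, Ideal.mul_mem_right d _ hc, by
        simp [LinearMap.toSpanSingleton_apply, mul_smul]⟩
    obtain ⟨c, hc, hcy⟩ := Submodule.mem_map.mp (h2 (h1 (Submodule.mem_span_singleton_self y)))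
    exact ⟨c, hc, by simpa [LinearMap.toSpanSingleton_apply] using hcy⟩
  · push_neg at h
    obtain ⟨x, hx⟩ := h
    obtain ⟨t, ht, ht'⟩ := SetLike.not_le_iff_exists.mp hx
    exact Or.inl ⟨x, t, ht', fun y => Submodule.mem_colon.mp ht y trivial⟩

lemma aux_key (hfaithful : (⊥ : Submodule R M).colon ⊤ = ⊥) (hmul : IsMultiplicationModule R M)
    {p : Ideal R} (hp : p.IsPrime) (hne : p • (⊤ : Submodule R M) ≠ ⊤)
    {r : R} {m : M} (hrm : r • m ∈ p • (⊤ : Submodule R M)) :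
    m ∈ p • (⊤ : Submodule R M) ∨ r ∈ p := by
  by_cases hm : m ∈ p • (⊤ : Submodule R M)
  · exact Or.inl hm
  right
  by_contra hr
  set J := (p • (⊤ : Submodule R M)).colon (Submodule.span R {m}) with hJ
  have hmemJ : ∀ s : R, s ∈ J ↔ s • m ∈ p • (⊤ : Submodule R M) := by
    intro s
    rw [hJ, Submodule.mem_colon]
    constructor
    · intro h; exact h m (Submodule.mem_span_singleton_self m)
    · intro h z hz
      obtain ⟨d, rfl⟩ := Submodule.mem_span_singleton.mp hz
      rw [smul_comm]
      exact Submodule.smul_mem _ d h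
  have hJne : J ≠ ⊤ := by
    intro h
    apply hm
    have h1 : (1 : R) ∈ J := h ▸ Submodule.mem_top
    simpa using (hmemJ 1).mp h1
  obtain ⟨𝔪, h𝔪, hJ𝔪⟩ := Ideal.exists_le_maximal J hJne
  have hpJ : p ≤ J := fun s hs => (hmemJ s).mpr (Submodule.smul_mem_smul hs Submodule.mem_top)
  rcases aux_dichotomy hmul 𝔪 with ⟨x, t, ht𝔪, ht⟩ | htor
  · have hd : ∀ z ∈ p • (⊤ : Submodule R M), ∃ d ∈ p, t • z = d • x := by
      intro z hz
      refine Submodule.smul_induction_on hz ?_ ?_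
      · intro a ha y _
        obtain ⟨c, hc⟩ := Submodule.mem_span_singleton.mp (ht y)
        exact ⟨a * c, Ideal.mul_mem_right c _ ha, by rw [smul_comm, ← hc, smul_smul]⟩
      · rintro z w ⟨d1, hd1, he1⟩ ⟨d2, hd2, he2⟩
        exact ⟨d1 + d2, Ideal.add_mem _ hd1 hd2, by rw [smul_add, he1, he2, add_smul]⟩
    obtain ⟨d, hdp, hdx⟩ := hd _ hrm
    obtain ⟨c, hc⟩ := Submodule.mem_span_singleton.mp (ht m)
    have h1 : (r * c - d) • x = 0 := by
      rw [sub_smul, mul_smul]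
      rw [hc, smul_comm r t m, hdx, sub_self]
    have hann : t * (r * c - d) = 0 := by
      have hz : ∀ y : M, (t * (r * c - d)) • y = 0 := by
        intro y
        obtain ⟨e, he⟩ := Submodule.mem_span_singleton.mp (ht y)
        rw [mul_comm, mul_smul, ← he, smul_comm, h1, smul_zero]
      have hb : t * (r * c - d) ∈ (⊥ : Submodule R M).colon ⊤ :=
        Submodule.mem_colon.mpr fun y _ => Submodule.mem_bot R |>.mpr (hz y)
      rw [hfaithful] at hb
      simpa using hb
    have htp : t ∉ p := fun h => ht𝔪 (hJ𝔪 (hpJ h))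
    have hsub : r * c - d ∈ p := by
      rcases hp.mem_or_mem (show t * (r * c - d) ∈ p by rw [hann]; exact p.zero_mem) with h | h
      · exact absurd h htp
      · exact h
    have hcp : c ∈ p := by
      have hrc : r * c ∈ p := by simpa using p.add_mem hsub hdp
      rcases hp.mem_or_mem hrc with h | h
      · exact absurd h hr
      · exact h
    have : t ∈ J := (hmemJ t).mpr (by
      rw [← hc]; exact Submodule.smul_mem_smul hcp Submodule.mem_top)
    exact ht𝔪 (hJ𝔪 this)
  · obtain ⟨c, hc𝔪, hcy⟩ := htor m
    have h1c : 1 - c ∈ J := (hmemJ _).mpr (by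
      rw [sub_smul, one_smul, hcy, sub_self]; exact Submodule.zero_mem _)
    have : (1 : R) ∈ 𝔪 := by simpa using 𝔪.add_mem (hJ𝔪 h1c) hc𝔪
    exact h𝔪.ne_top ((Ideal.eq_top_iff_one _).mpr this)

lemma aux_colon_eq (hfaithful : (⊥ : Submodule R M).colon ⊤ = ⊥)
    (hmul : IsMultiplicationModule R M) {p : Ideal R} (hp : p.IsPrime)
    (hne : p • (⊤ : Submodule R M) ≠ ⊤) :
    (p • (⊤ : Submodule R M)).colon ⊤ = p := by
  apply le_antisymm
  · intro r hr
    obtain ⟨m, hm⟩ : ∃ m : M, m ∉ p • (⊤ : Submodule R M) := by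
      by_contra h
      push_neg at h
      exact hne (Submodule.eq_top_iff'.mpr h)
    rcases aux_key hfaithful hmul hp hne (Submodule.mem_colon.mp hr m trivial) with
      h | h
    · exact absurd h hm
    · exact h
  · intro s hs
    exact Submodule.mem_colon.mpr fun y _ => Submodule.smul_mem_smul hs Submodule.mem_top

lemma aux_colon_prime {P : Submodule R M} (hP : P.IsPrimeSubmodule) : (P.colon ⊤).IsPrime := by
  constructor
  · intro h
    apply hP.1
    rw [Submodule.eq_top_iff']
    intro m
    have h1 : (1 : R) ∈ P.colon ⊤ := h ▸ Submodule.mem_top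
    simpa using Submodule.mem_colon.mp h1 m trivial
  · intro a b hab
    by_cases hb : b ∈ P.colon ⊤
    · exact Or.inr hb
    · left
      obtain ⟨m, hm⟩ : ∃ m, b • m ∉ P := by
        by_contra h
        push_neg at h
        exact hb (Submodule.mem_colon.mpr fun m _ => h m)
      have habm : a • (b • m) ∈ P := by
        rw [smul_smul]
        exact Submodule.mem_colon.mp hab m trivial
      rcases hP.2 a (b • m) habm with h | h
      · exact absurd h hm
      · exact h

lemma aux_smul_prime (hfaithful : (⊥ : Submodule R M).colon ⊤ = ⊥)
    (hmul : IsMultiplicationModule R M) {q : Ideal R} (hq : q.IsPrime)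
    (hne : q • (⊤ : Submodule R M) ≠ ⊤) :
    (q • (⊤ : Submodule R M)).IsPrimeSubmodule := by
  refine ⟨hne, fun r m hrm => ?_⟩
  rcases aux_key hfaithful hmul hq hne hrm with h | h
  · exact Or.inl h
  · right
    rw [aux_colon_eq hfaithful hmul hq hne]
    exact h

lemma aux_smul_minimal (hfaithful : (⊥ : Submodule R M).colon ⊤ = ⊥)
    (hmul : IsMultiplicationModule R M) {q : Ideal R} (hq : q ∈ minimalPrimes R)
    (hne : q • (⊤ : Submodule R M) ≠ ⊤) :
    (q • (⊤ : Submodule R M)).IsMinimalPrime := by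
  have hqp : q.IsPrime := hq.1.1
  refine ⟨aux_smul_prime hfaithful hmul hqp hne, fun Q hQ hle => ?_⟩
  have h1 : Q.colon ⊤ ≤ q := by
    rw [← aux_colon_eq hfaithful hmul hqp hne]
    intro s hs
    exact Submodule.mem_colon.mpr fun y hy => hle (Submodule.mem_colon.mp hs y hy)
  have h2 : q ≤ Q.colon ⊤ := hq.2 ⟨aux_colon_prime hQ, bot_le⟩ h1
  calc Q = Q.colon ⊤ • ⊤ := (aux_colon_smul hmul Q).symm
    _ = q • ⊤ := by rw [le_antisymm h1 h2]

theorem stmt7 (hfaithful : (⊥ : Submodule R M).colon ⊤ = ⊥)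
    (hmul : IsMultiplicationModule R M) (I : Ideal R) :
    idealPrimeRad I • (⊤ : Submodule R M) ≤ primeRad (I • (⊤ : Submodule R M)) ∧
      (Module.Finite R M →
        idealPrimeRad I • (⊤ : Submodule R M) = primeRad (I • (⊤ : Submodule R M))) := by
  have h1 : idealPrimeRad I • (⊤ : Submodule R M) ≤ primeRad (I • (⊤ : Submodule R M)) := by
    apply le_sInf
    rintro P ⟨⟨hPpr, hPmin⟩, hIP⟩
    have hPeq : P.colon ⊤ • ⊤ = P := aux_colon_smul hmul P
    have hpprime : (P.colon ⊤).IsPrime := aux_colon_prime hPpr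
    haveI := hpprime
    obtain ⟨q, hq, hqp⟩ := Ideal.exists_minimalPrimes_le (bot_le : ⊥ ≤ P.colon ⊤)
    have hqP : q • (⊤ : Submodule R M) ≤ P :=
      le_trans (Submodule.smul_mono_left hqp) (le_of_eq hPeq)
    have hqne : q • (⊤ : Submodule R M) ≠ ⊤ := fun h => hPpr.1 (top_le_iff.mp (h ▸ hqP))
    have hqprime := aux_smul_prime hfaithful hmul hq.1.1 hqne
    have hQ : q • (⊤ : Submodule R M) = P := hPmin _ hqprime hqP
    have hcolon : P.colon ⊤ = q := by rw [← hQ, aux_colon_eq hfaithful hmul hq.1.1 hqne]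
    have hmem : P.colon ⊤ ∈ {p : Ideal R | p ∈ minimalPrimes R ∧ I ≤ p} := by
      constructor
      · rw [hcolon]; exact hq
      · intro a ha
        exact Submodule.mem_colon.mpr fun y _ => hIP (Submodule.smul_mem_smul ha Submodule.mem_top)
    calc idealPrimeRad I • (⊤ : Submodule R M)
        ≤ P.colon ⊤ • ⊤ := Submodule.smul_mono_left (sInf_le hmem)
      _ = P := hPeq
  refine ⟨h1, fun hfin => le_antisymm h1 ?_⟩
  intro x hx
  have hxa : (Submodule.span R {x}).colon ⊤ ≤ idealPrimeRad I := by
    apply le_sInf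
    rintro q ⟨hqmin, hIq⟩
    have hqp : q.IsPrime := hqmin.1.1
    have hqne : q • (⊤ : Submodule R M) ≠ ⊤ := by
      intro h
      obtain ⟨r, hr1, hr0⟩ := Submodule.exists_sub_one_mem_and_smul_eq_zero_of_fg_of_le_smul q ⊤
        (Module.finite_def.mp hfin) (le_of_eq h.symm)
      have hrb : r ∈ (⊥ : Submodule R M).colon ⊤ :=
        Submodule.mem_colon.mpr fun y hy => (Submodule.mem_bot R).mpr (hr0 y hy)
      rw [hfaithful] at hrb
      have hr : r = 0 := by simpa using hrb
      rw [hr] at hr1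
      have hone : (1 : R) ∈ q := by simpa using q.neg_mem hr1
      exact hqp.ne_top ((Ideal.eq_top_iff_one _).mpr hone)
    have hxq : x ∈ q • (⊤ : Submodule R M) := by
      have hmem : q • (⊤ : Submodule R M) ∈
          {P : Submodule R M | P.IsMinimalPrime ∧ I • ⊤ ≤ P} :=
        ⟨aux_smul_minimal hfaithful hmul hqmin hqne, Submodule.smul_mono_left hIq⟩
      exact sInf_le hmem hx
    intro a ha
    rw [← aux_colon_eq hfaithful hmul hqp hqne]
    refine Submodule.mem_colon.mpr fun y hy => ?_
    have hay : a • y ∈ Submodule.span R {x} := Submodule.mem_colon.mp ha y hy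
    exact (Submodule.span_le.mpr (by simpa [Set.singleton_subset_iff] using hxq)) hay
  have hxx : x ∈ (Submodule.span R {x}).colon ⊤ • (⊤ : Submodule R M) := by
    rw [aux_colon_smul hmul]
    exact Submodule.mem_span_singleton_self x
  exact Submodule.smul_mono_left hxa hxx
end

section
/- Let M be a faithful multiplication R-module and N a quasi z°-submodule of M. Then (N :_R M) is contained in the set Zd_R(M) of zero-divisors of R on M. -/
variable {R : Type*} [CommRing R] {M : Type*} [AddCommGroup M] [Module R M]

section Aux

variable {R : Type*} [CommRing R] {M : Type*} [AddCommGroup M] [Module R M]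

lemma faithful_eq_zero (hf : (⊥ : Submodule R M).colon ⊤ = ⊥) {x : R}
    (h : ∀ m : M, x • m = 0) : x = 0 := by
  have hx : x ∈ (⊥ : Submodule R M).colon ⊤ :=
    Submodule.mem_colon.mpr fun p _ => by simp [h p]
  rw [hf] at hx
  simpa using hx

lemma mem_colon_smul_top (hmul : IsMultiplicationModule R M) (m : M) :
    m ∈ ((Submodule.span R {m}).colon ⊤) • (⊤ : Submodule R M) := by
  obtain ⟨I, hI⟩ := hmul (Submodule.span R {m})
  have hIle : I ≤ (Submodule.span R {m}).colon ⊤ := by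
    intro a ha
    exact Submodule.mem_colon.mpr fun p _ => by
      rw [hI]; exact Submodule.smul_mem_smul ha trivial
  have hle : Submodule.span R {m} ≤ ((Submodule.span R {m}).colon ⊤) • ⊤ := by
    conv_lhs => rw [hI]
    exact Submodule.smul_mono_left hIle
  exact hle (Submodule.mem_span_singleton_self m)

/-- Key lemma: in a faithful multiplication module, if `a ∉ q` (prime) but
`aM ⊆ qM` while `qM ≠ M`, we get a contradiction. -/
lemma key_lemma (hf : (⊥ : Submodule R M).colon ⊤ = ⊥)
    (hmul : IsMultiplicationModule R M) {q : Ideal R} (hq : q.IsPrime) {a : R}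
    (haq : a ∉ q) (haM : ∀ m : M, a • m ∈ q • (⊤ : Submodule R M)) {m : M}
    (hm : m ∉ q • (⊤ : Submodule R M)) : False := by
  have hmIm := mem_colon_smul_top hmul m
  -- a • m ∈ q • span {m}
  have ham : a • m ∈ q • Submodule.span R {m} := by
    refine Submodule.smul_induction_on
      (p := fun x => a • x ∈ q • Submodule.span R {m}) hmIm ?_ ?_
    · intro c hc n _
      have h2 : ∀ x ∈ q • (⊤ : Submodule R M), c • x ∈ q • Submodule.span R {m} := by
        intro x hx
        refine Submodule.smul_induction_on
          (p := fun x => c • x ∈ q • Submodule.span R {m}) hx ?_ ?_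
        · intro d hd n' _
          have hcn' : c • n' ∈ Submodule.span R {m} := Submodule.mem_colon.mp hc n' trivial
          rw [smul_comm c d n']
          exact Submodule.smul_mem_smul hd hcn'
        · intro x y hx hy
          rw [smul_add]; exact add_mem hx hy
      rw [smul_comm a c n]
      exact h2 _ (haM n)
    · intro x y hx hy
      rw [smul_add]; exact add_mem hx hy
  obtain ⟨c, hcq, hcm⟩ := Submodule.mem_smul_span_singleton.mp ham
  have hbm : (a - c) • m = 0 := by rw [sub_smul, hcm, sub_self]
  have hbq : a - c ∉ q := fun h => haq (by simpa using add_mem h hcq)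
  have hIq : (Submodule.span R {m}).colon (⊤ : Submodule R M) ≤ q := by
    intro x hx
    have hbx : (a - c) * x = 0 := by
      apply faithful_eq_zero hf
      intro n
      obtain ⟨r', hr'⟩ :=
        Submodule.mem_span_singleton.mp (Submodule.mem_colon.mp hx n trivial)
      rw [mul_smul, ← hr', smul_comm, hbm, smul_zero]
    have : (a - c) * x ∈ q := hbx ▸ q.zero_mem
    exact (hq.mem_or_mem this).resolve_left hbq
  exact hm (Submodule.smul_mono_left hIq hmIm)

lemma colon_isPrime {P : Submodule R M} (hP : P.IsPrimeSubmodule) :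
    (P.colon (⊤ : Submodule R M)).IsPrime := by
  constructor
  · intro h
    apply hP.1
    rw [eq_top_iff]
    intro m _
    have h1 : (1 : R) ∈ P.colon (⊤ : Submodule R M) := h ▸ Submodule.mem_top
    simpa using Submodule.mem_colon.mp h1 m trivial
  · intro x y hxy
    by_cases hy : y ∈ P.colon (⊤ : Submodule R M)
    · exact Or.inr hy
    · left
      obtain ⟨n, -, hn⟩ : ∃ n, n ∈ (⊤ : Submodule R M) ∧ y • n ∉ P := by
        by_contra h
        push_neg at h
        exact hy (Submodule.mem_colon.mpr fun p hp => h p hp)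
      have hxyn : x • (y • n) ∈ P := by
        rw [smul_smul]
        exact Submodule.mem_colon.mp hxy n trivial
      exact (hP.2 x (y • n) hxyn).resolve_left hn

lemma eq_colon_smul (hmul : IsMultiplicationModule R M) (P : Submodule R M) :
    P = (P.colon (⊤ : Submodule R M)) • ⊤ := by
  refine le_antisymm ?_ (Submodule.smul_le.mpr fun r hr n _ =>
    Submodule.mem_colon.mp hr n trivial)
  obtain ⟨I, hI⟩ := hmul P
  have hIle : I ≤ P.colon (⊤ : Submodule R M) := by
    intro a ha
    exact Submodule.mem_colon.mpr fun p _ => by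
      rw [hI]; exact Submodule.smul_mem_smul ha trivial
  conv_lhs => rw [hI]
  exact Submodule.smul_mono_left hIle

lemma minimal_prime_pow_ann {q : Ideal R} (hq : q ∈ minimalPrimes R) {r : R}
    (hr : r ∈ q) : ∃ s ∉ q, ∃ n : ℕ, s * r ^ n = 0 := by
  haveI hqp : q.IsPrime := hq.1.1
  have hnil : IsNilpotent (algebraMap R (Localization q.primeCompl) r) := by
    have : Ring.KrullDimLE 0 (Localization.AtPrime q) := .of_isLocalization _ hq _
    rw [Ring.KrullDimLE.isNilpotent_iff_mem_maximalIdeal]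
    exact (IsLocalization.AtPrime.to_map_mem_maximal_iff _ q r).mpr hr
  obtain ⟨n, hn⟩ := hnil
  rw [← map_pow] at hn
  obtain ⟨⟨s, hs⟩, hsn⟩ :=
    (IsLocalization.map_eq_zero_iff q.primeCompl (Localization q.primeCompl) (r ^ n)).mp hn
  exact ⟨s, hs, n, hsn⟩

end Aux


theorem stmt14 (hfaithful : (⊥ : Submodule R M).colon ⊤ = ⊥)
    (hmul : IsMultiplicationModule R M) (N : Submodule R M)
    (hN : IsQuasiZSubmodule N) :
    ∀ r ∈ N.colon ⊤, ∃ m : M, m ≠ 0 ∧ r • m = 0 := by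
  intro r hr
  by_contra hcon
  push_neg at hcon
  have hreg : ∀ m : M, r • m = 0 → m = 0 := by
    intro m hm
    by_contra h0
    exact hcon m h0 hm
  have hrad := hN.2 r hr
  have hne : {P : Submodule R M |
      P.IsMinimalPrime ∧ Ideal.span {r} • (⊤ : Submodule R M) ≤ P}.Nonempty := by
    by_contra h
    rw [Set.not_nonempty_iff_eq_empty] at h
    rw [primeRad, h, sInf_empty, top_le_iff] at hrad
    exact hN.1 hrad
  obtain ⟨P, hPmin, hPr⟩ := hne
  have hpprime : (P.colon (⊤ : Submodule R M)).IsPrime := colon_isPrime hPmin.1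
  have hPeq : P = (P.colon (⊤ : Submodule R M)) • ⊤ := eq_colon_smul hmul P
  have hrp : r ∈ P.colon (⊤ : Submodule R M) :=
    Submodule.mem_colon.mpr fun n _ =>
      hPr (Submodule.smul_mem_smul (Ideal.mem_span_singleton_self r) trivial)
  obtain ⟨q, hqmin, hqp⟩ :=
    Ideal.exists_minimalPrimes_le (bot_le : ⊥ ≤ P.colon (⊤ : Submodule R M))
  haveI hqprime : q.IsPrime := hqmin.1.1
  have hQP : q • (⊤ : Submodule R M) ≤ P := by
    conv_rhs => rw [hPeq]
    exact Submodule.smul_mono_left hqp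
  have hQne : q • (⊤ : Submodule R M) ≠ ⊤ := by
    intro h
    exact hPmin.1.1 (top_le_iff.mp (h ▸ hQP))
  obtain ⟨m0, hm0⟩ : ∃ m0 : M, m0 ∉ q • (⊤ : Submodule R M) := by
    by_contra h
    push_neg at h
    exact hQne (eq_top_iff.mpr fun m _ => h m)
  have hC : (q • (⊤ : Submodule R M)).colon ⊤ ≤ q := by
    intro w hw
    by_contra hwq
    exact key_lemma hfaithful hmul hqprime hwq
      (fun m => Submodule.mem_colon.mp hw m trivial) hm0
  have hQprime : (q • (⊤ : Submodule R M)).IsPrimeSubmodule := by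
    refine ⟨hQne, fun a m ham => ?_⟩
    by_cases haq : a ∈ q
    · exact Or.inr (Submodule.mem_colon.mpr fun n _ => Submodule.smul_mem_smul haq trivial)
    · left
      have hmIm := mem_colon_smul_top hmul m
      have hIq : (Submodule.span R {m}).colon (⊤ : Submodule R M) ≤ q := by
        intro x hx
        have hax : a * x ∈ (q • (⊤ : Submodule R M)).colon ⊤ := by
          refine Submodule.mem_colon.mpr fun n _ => ?_
          obtain ⟨r', hr'⟩ :=
            Submodule.mem_span_singleton.mp (Submodule.mem_colon.mp hx n trivial)
          have heq : (a * x) • n = r' • (a • m) := by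
            rw [mul_smul, ← hr', smul_comm a r' m]
          rw [heq]
          exact Submodule.smul_mem _ r' ham
        exact (hqprime.mem_or_mem (hC hax)).resolve_left haq
      exact Submodule.smul_mono_left hIq hmIm
  have hQeqP := hPmin.2 _ hQprime hQP
  have hrq : r ∈ q := hC (by rw [hQeqP]; exact hrp)
  obtain ⟨s, hs, n, hsn⟩ := minimal_prime_pow_ann hqmin hrq
  obtain ⟨m1, hm1⟩ : ∃ m1 : M, s • m1 ≠ 0 := by
    by_contra h
    push_neg at h
    exact hs (by rw [faithful_eq_zero hfaithful h]; exact q.zero_mem)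
  have hpow : ∀ k : ℕ, ∀ m : M, r ^ k • m = 0 → m = 0 := by
    intro k
    induction k with
    | zero => intro m h; simpa using h
    | succ k ih =>
      intro m h
      rw [pow_succ, mul_smul] at h
      exact hreg m (ih _ h)
  apply hm1
  apply hpow n
  rw [smul_smul, mul_comm, hsn, zero_smul]
end

section
/- Let M be a faithful multiplication R-module. Then the following are equivalent: (a) R is a reduced ring (equivalently, M is a reduced module); (b) the zero submodule of M is a quasi z°-submodule of M. -/
variable {R : Type*} [CommRing R] {M : Type*} [AddCommGroup M] [Module R M]

section Aux

variable {R : Type*} [CommRing R] {M : Type*} [AddCommGroup M] [Module R M]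

lemma mem_colon_top {N : Submodule R M} {r : R} :
    r ∈ N.colon ⊤ ↔ ∀ m : M, r • m ∈ N := by
  rw [Submodule.mem_colon]
  exact ⟨fun h m => h m trivial, fun h m _ => h m⟩

lemma prime_pow_smul {P : Submodule R M} (hP : P.IsPrimeSubmodule) {a : R} :
    ∀ (n : ℕ) (m : M), a ^ n • m ∈ P → m ∈ P ∨ a ∈ P.colon ⊤ := by
  intro n
  induction n with
  | zero => intro m h; left; simpa using h
  | succ n ih =>
    intro m h
    rw [pow_succ, mul_smul] at h
    rcases ih (a • m) h with h' | h'
    · exact hP.2 a m h'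
    · exact Or.inr h'

/-- The infimum of a nonempty chain of prime submodules is prime. -/
lemma chain_sInf_prime {c : Set (Submodule R M)} (hc : IsChain (· ≤ ·) c)
    (hne : c.Nonempty) (hprime : ∀ P ∈ c, P.IsPrimeSubmodule) :
    (sInf c).IsPrimeSubmodule := by
  obtain ⟨P₀, hP₀⟩ := hne
  constructor
  · intro htop
    exact (hprime P₀ hP₀).1 (top_le_iff.mp (htop ▸ sInf_le hP₀))
  · intro r m hrm
    by_cases hm : m ∈ sInf c
    · exact Or.inl hm
    · right
      rw [Submodule.mem_sInf] at hm
      push_neg at hm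
      obtain ⟨Pi, hPi, hmPi⟩ := hm
      rw [mem_colon_top]
      intro x
      rw [Submodule.mem_sInf]
      intro Pj hPj
      rcases hc.total hPi hPj with hij | hji
      · -- Pi ≤ Pj : r ∈ colon Pi ≤ colon Pj
        have : r ∈ Pi.colon ⊤ := by
          rcases (hprime Pi hPi).2 r m ((Submodule.mem_sInf.mp hrm) Pi hPi) with h | h
          · exact absurd h hmPi
          · exact h
        exact hij (mem_colon_top.mp this x)
      · -- Pj ≤ Pi : m ∉ Pj, r•m ∈ Pj
        have hmPj : m ∉ Pj := fun h => hmPi (hji h)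
        rcases (hprime Pj hPj).2 r m ((Submodule.mem_sInf.mp hrm) Pj hPj) with h | h
        · exact absurd h hmPj
        · exact mem_colon_top.mp h x

lemma exists_minimalPrime_le {P : Submodule R M} (hP : P.IsPrimeSubmodule) :
    ∃ Q : Submodule R M, Q.IsMinimalPrime ∧ Q ≤ P := by
  set s : Set (Submodule R M)ᵒᵈ :=
    {Q : (Submodule R M)ᵒᵈ | (OrderDual.ofDual Q).IsPrimeSubmodule ∧ OrderDual.ofDual Q ≤ P}
    with hs
  have hz : ∀ c ⊆ s, IsChain (· ≤ ·) c → ∀ y ∈ c, ∃ ub ∈ s, ∀ z ∈ c, z ≤ ub := by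
    intro c hcs hchain y hy
    refine ⟨OrderDual.toDual (sInf (OrderDual.ofDual '' c)), ⟨?_, ?_⟩, ?_⟩
    · refine chain_sInf_prime ?_ ⟨_, ⟨y, hy, rfl⟩⟩ (fun Q ⟨q, hq, hq'⟩ => hq' ▸ (hcs hq).1)
      exact (IsChain.image_of_map_rel _ _ OrderDual.ofDual (fun _ _ h => h) hchain).symm
    · exact le_trans (sInf_le ⟨y, hy, rfl⟩) (hcs hy).2
    · intro z hz
      exact sInf_le (show OrderDual.ofDual z ∈ OrderDual.ofDual '' c from ⟨z, hz, rfl⟩)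
  obtain ⟨m, hPm, hm⟩ := zorn_le_nonempty₀ s hz (OrderDual.toDual P) ⟨hP, le_rfl⟩
  refine ⟨OrderDual.ofDual m, ⟨hm.1.1, ?_⟩, hm.1.2⟩
  intro Q hQ hQm
  have hQs : (OrderDual.toDual Q) ∈ s := ⟨hQ, le_trans hQm hm.1.2⟩
  exact le_antisymm hQm (hm.2 hQs hQm)

/-- If `R` is reduced and `M` faithful multiplication, then every nonzero element
avoids some prime submodule. -/
lemma exists_prime_not_mem (hred : IsReduced R)
    (hfaithful : (⊥ : Submodule R M).colon ⊤ = ⊥)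
    (hmul : IsMultiplicationModule R M) {x : M} (hx : x ≠ 0) :
    ∃ P : Submodule R M, P.IsPrimeSubmodule ∧ x ∉ P := by
  obtain ⟨I, hI⟩ := hmul (Submodule.span R {x})
  -- find a nonzero a ∈ I
  have hIne : ∃ a ∈ I, a ≠ 0 := by
    by_contra h
    push_neg at h
    have : I = ⊥ := by
      ext a; simp only [Ideal.mem_bot, Submodule.mem_bot]
      exact ⟨fun ha => h a ha, fun ha => ha ▸ I.zero_mem⟩
    rw [this, Submodule.bot_smul] at hI
    exact hx (by simpa using hI.le (Submodule.mem_span_singleton_self x))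
  obtain ⟨a, haI, ha0⟩ := hIne
  have ha_smul : ∀ m : M, a • m ∈ Submodule.span R {x} := by
    intro m
    rw [hI]
    exact Submodule.smul_mem_smul haI trivial
  -- a^n • x ≠ 0 for all n
  have key : ∀ n : ℕ, a ^ n • x ≠ 0 := by
    intro n hn
    have : a ^ (n + 1) ∈ (⊥ : Submodule R M).colon ⊤ := by
      rw [mem_colon_top]
      intro m
      obtain ⟨t, ht⟩ := Submodule.mem_span_singleton.mp (ha_smul m)
      rw [Submodule.mem_bot, pow_succ, mul_smul, ← ht, smul_comm, hn, smul_zero]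
    rw [hfaithful, Ideal.mem_bot] at this
    exact ha0 (hred.eq_zero a ⟨n + 1, this⟩)
  -- Zorn to get maximal submodule avoiding all a^n • x
  set S : Set (Submodule R M) := {N | ∀ n : ℕ, a ^ n • x ∉ N} with hS
  have hbot : (⊥ : Submodule R M) ∈ S := fun n h => key n (Submodule.mem_bot R |>.mp h)
  obtain ⟨P, -, hPS, hPmax⟩ := zorn_le_nonempty₀ S
    (fun c hcs hchain y hy => by
      refine ⟨sSup c, ?_, fun z hz => le_sSup hz⟩
      intro n hn
      obtain ⟨Q, hQc, hQ⟩ := (Submodule.mem_sSup_of_directed ⟨y, hy⟩ hchain.directedOn).mp hn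
      exact hcs hQc n hQ)
    ⊥ hbot
  have hxP : x ∉ P := by
    have := hPS 0
    simpa using this
  refine ⟨P, ⟨?_, ?_⟩, hxP⟩
  · intro h; exact hxP (h ▸ trivial)
  · intro r m hrm
    by_contra hcon
    push_neg at hcon
    obtain ⟨hm, hr⟩ := hcon
    -- from m ∉ P
    have h1 : P ⊔ Submodule.span R {m} ∉ S := by
      intro hmem
      exact hm (hPmax hmem le_sup_left (Submodule.mem_sup_right (Submodule.mem_span_singleton_self m)))
    have h2 : ∃ m' : M, r • m' ∉ P := by
      by_contra h
      push_neg at h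
      exact hr (mem_colon_top.mpr h)
    obtain ⟨m', hm'⟩ := h2
    have h3 : P ⊔ Submodule.span R {r • m'} ∉ S := by
      intro hmem
      exact hm' (hPmax hmem le_sup_left
        (Submodule.mem_sup_right (Submodule.mem_span_singleton_self _)))
    simp only [hS, Set.mem_setOf_eq, not_forall, not_not] at h1 h3
    obtain ⟨n, hn⟩ := h1
    obtain ⟨k, hk⟩ := h3
    obtain ⟨p₁, hp₁, z₁, hz₁, e1⟩ := Submodule.mem_sup.mp hn
    obtain ⟨s₁, rfl⟩ := Submodule.mem_span_singleton.mp hz₁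
    obtain ⟨p₂, hp₂, z₂, hz₂, e2⟩ := Submodule.mem_sup.mp hk
    obtain ⟨c, rfl⟩ := Submodule.mem_span_singleton.mp hz₂
    obtain ⟨t, ht⟩ := Submodule.mem_span_singleton.mp (ha_smul m')
    -- compute a^(n+k+1) • x ∈ P
    have e3 : a ^ (k + 1) • x = a • p₂ + (c * r * t) • x := by
      have h1 : a ^ (k + 1) • x = a • (a ^ k • x) := by
        rw [pow_succ, mul_comm (a ^ k) a, mul_smul]
      rw [h1, ← e2, smul_add]
      congr 1
      have h2 : a • c • r • m' = (c * r) • (a • m') := by module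
      rw [h2, ← ht]
      module
    have e4 : a ^ (n + (k + 1)) • x ∈ P := by
      have hsplit : a ^ (n + (k + 1)) • x
          = a ^ (n + 1) • p₂ + (c * r * t) • p₁ + (c * t * s₁) • (r • m) := by
        have h3 : a ^ (n + (k + 1)) • x = a ^ n • (a ^ (k + 1) • x) := by
          rw [pow_add, mul_smul]
        rw [h3, e3, smul_add]
        have h4 : a ^ n • ((c * r * t) • x) = (c * r * t) • (a ^ n • x) := smul_comm _ _ _
        rw [h4, ← e1, smul_add]
        have h5 : a ^ n • a • p₂ = a ^ (n + 1) • p₂ := by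
          rw [smul_smul, ← pow_succ]
        rw [h5]
        have h6 : (c * r * t) • s₁ • m = (c * t * s₁) • (r • m) := by module
        rw [h6, add_assoc]
      rw [hsplit]
      exact Submodule.add_mem _
        (Submodule.add_mem _ (Submodule.smul_mem _ _ hp₂) (Submodule.smul_mem _ _ hp₁))
        (Submodule.smul_mem _ _ hrm)
    exact hPS (n + (k + 1)) e4

end Aux

theorem stmt19 [Nontrivial M] (hfaithful : (⊥ : Submodule R M).colon ⊤ = ⊥)
    (hmul : IsMultiplicationModule R M) :
    IsReduced R ↔ IsQuasiZSubmodule (⊥ : Submodule R M) := by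
  constructor
  · intro hred
    constructor
    · exact bot_ne_top
    · intro a ha
      have ha0 : a = 0 := by
        rw [hfaithful] at ha; exact (Ideal.mem_bot).mp ha
      subst ha0
      have hspan : Ideal.span ({(0:R)} : Set R) • (⊤ : Submodule R M) = ⊥ := by
        have h0 : Ideal.span ({(0:R)} : Set R) = ⊥ := Ideal.span_singleton_eq_bot.mpr rfl
        rw [h0, Submodule.bot_smul]
      rw [hspan]
      intro y hy
      by_contra hy0
      have hy0' : y ≠ 0 := fun h => hy0 (h ▸ Submodule.zero_mem _)
      obtain ⟨P, hP, hyP⟩ := exists_prime_not_mem hred hfaithful hmul hy0'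
      obtain ⟨Q, hQmin, hQP⟩ := exists_minimalPrime_le hP
      have : y ∈ Q := Submodule.mem_sInf.mp hy Q ⟨hQmin, bot_le⟩
      exact hyP (hQP this)
  · intro hqz
    refine ⟨fun b hb => ?_⟩
    obtain ⟨n, hn⟩ := hb
    have hmin : primeRad (Ideal.span ({(0:R)} : Set R) • (⊤ : Submodule R M)) ≤ ⊥ :=
      hqz.2 0 (Submodule.zero_mem _)
    have hb0 : b ∈ (⊥ : Submodule R M).colon ⊤ := by
      rw [mem_colon_top]
      intro m
      have hmem : b • m ∈ primeRad (Ideal.span ({(0:R)} : Set R) • (⊤ : Submodule R M)) := by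
        rw [primeRad]
        rw [Submodule.mem_sInf]
        rintro P ⟨hPmin, -⟩
        have h0 : b ^ n • (b • m) ∈ P := by
          rw [smul_comm, hn, zero_smul, smul_zero]; exact P.zero_mem
        rcases prime_pow_smul hPmin.1 n (b • m) h0 with h | h
        · exact h
        · exact mem_colon_top.mp h m
      exact hmin hmem
    rw [hfaithful] at hb0
    exact (Ideal.mem_bot).mp hb0
end
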